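/- The matroid Δₙ is the transversal matroid of the bipartite graph G on vertex parts S = {x_{ij} : 1 ≤ i ≤ n, 1 ≤ j ≤ 3} and T = {a,b,c} ∪ {v₁,…,vₙ}, where each x_{ij} is adjacent to exactly a, b, c, and vᵢ. -/

import Mathlib

open Finset

/-- The profile of a subset `U` of the ground set `{x_{ij}} = Fin n × Fin 3`:
`profile U i` is the number of `j` with `x_{ij} ∈ U`. -/
def profileOf {n : ℕ} (U : Finset (Fin n × Fin 3)) (i : Fin n) : ℕ :=
  (U.filter (fun p => p.1 = i)).card

/-- A profile is *bad* if, up to permutation of the indices, it equals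
`(3,3,0,…,0)`, `(3,2,2,0,…,0)` or `(2,2,2,2,0,…,0)`. -/
def IsBadProfile {n : ℕ} (c : Fin n → ℕ) : Prop :=
  (∃ i j, i ≠ j ∧ c i = 3 ∧ c j = 3 ∧ ∀ k, k ≠ i → k ≠ j → c k = 0) ∨
  (∃ i j k, i ≠ j ∧ i ≠ k ∧ j ≠ k ∧ c i = 3 ∧ c j = 2 ∧ c k = 2 ∧
    ∀ l, l ≠ i → l ≠ j → l ≠ k → c l = 0) ∨
  (∃ i j k l, i ≠ j ∧ i ≠ k ∧ i ≠ l ∧ j ≠ k ∧ j ≠ l ∧ k ≠ l ∧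
    c i = 2 ∧ c j = 2 ∧ c k = 2 ∧ c l = 2 ∧
    ∀ m, m ≠ i → m ≠ j → m ≠ k → m ≠ l → c m = 0)

/-- `U` is a face of the simplicial complex `Δₙ`: it contains no (minimal)
nonface, i.e. no subset whose profile is bad. -/
def IsFaceD (n : ℕ) (U : Finset (Fin n × Fin 3)) : Prop :=
  ¬ ∃ W : Finset (Fin n × Fin 3), W ⊆ U ∧ IsBadProfile (profileOf W)

/-- `U` is a facet (maximal face) of `Δₙ`. -/
def IsFacetD (n : ℕ) (U : Finset (Fin n × Fin 3)) : Prop :=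
  IsFaceD n U ∧ ∀ W : Finset (Fin n × Fin 3), IsFaceD n W → U ⊆ W → W = U

/-- A profile is a permutation of `(3,2,1,1,…,1)`. -/
def IsProfile321 {n : ℕ} (c : Fin n → ℕ) : Prop :=
  ∃ i j, i ≠ j ∧ c i = 3 ∧ c j = 2 ∧ ∀ k, k ≠ i → k ≠ j → c k = 1

/-- A profile is a permutation of `(2,2,2,1,…,1)`. -/
def IsProfile2221 {n : ℕ} (c : Fin n → ℕ) : Prop :=
  ∃ i j k, i ≠ j ∧ i ≠ k ∧ j ≠ k ∧ c i = 2 ∧ c j = 2 ∧ c k = 2 ∧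
    ∀ l, l ≠ i → l ≠ j → l ≠ k → c l = 1

/-- Adjacency in the bipartite graph `G` on parts `S = {x_{ij}}` and
`T = {a,b,c} ⊔ {v₁,…,vₙ}`: the vertex `x_{ij}` is adjacent exactly to
`a`, `b`, `c` and to `vᵢ`. -/
def AdjG {n : ℕ} (p : Fin n × Fin 3) (t : Fin 3 ⊕ Fin n) : Prop :=
  match t with
  | Sum.inl _ => True
  | Sum.inr i => i = p.1

section Lemmas
variable {n : ℕ}

lemma profile_mono {W U : Finset (Fin n × Fin 3)} (h : W ⊆ U) (i : Fin n) :
    profileOf W i ≤ profileOf U i :=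
  card_le_card (filter_subset_filter _ h)

lemma profile_le_three (U : Finset (Fin n × Fin 3)) (i : Fin n) :
    profileOf U i ≤ 3 := by
  have : (U.filter (fun p => p.1 = i)).card ≤ (univ : Finset (Fin 3)).card := by
    apply card_le_card_of_injOn (fun p => p.2) (fun p _ => mem_univ _)
    intro p hp q hq h2
    simp only [coe_filter, Set.mem_setOf_eq] at hp hq
    exact Prod.ext (hp.2.trans hq.2.symm) h2
  simpa [profileOf] using this

lemma card_eq_sum_profile (U : Finset (Fin n × Fin 3)) :
    U.card = ∑ i, profileOf U i :=
  card_eq_sum_card_fiberwise (fun p _ => mem_univ p.1)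

lemma profile_piece {t : Finset (Fin n × Fin 3)} {i : Fin n}
    (ht : ∀ p ∈ t, p.1 = i) (k : Fin n) :
    profileOf t k = if k = i then t.card else 0 := by
  unfold profileOf
  split_ifs with h
  · subst h; rw [filter_true_of_mem (fun p hp => ht p hp)]
  · rw [filter_false_of_mem, card_empty]
    intro p hp hpk
    exact absurd (hpk.symm.trans (ht p hp)) h

lemma profile_union {s t : Finset (Fin n × Fin 3)} (h : Disjoint s t) (k : Fin n) :
    profileOf (s ∪ t) k = profileOf s k + profileOf t k := by
  unfold profileOf
  rw [filter_union, card_union_of_disjoint (disjoint_filter_filter h)]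

lemma pieces_disjoint {s t : Finset (Fin n × Fin 3)} {i j : Fin n}
    (hs : ∀ p ∈ s, p.1 = i) (ht : ∀ p ∈ t, p.1 = j) (hij : i ≠ j) :
    Disjoint s t := by
  rw [disjoint_left]
  intro p hps hpt
  exact hij ((hs p hps) ▸ (ht p hpt) ▸ rfl)

lemma matching_card_le (W : Finset (Fin n × Fin 3)) (f : Fin n × Fin 3 → Fin 3 ⊕ Fin n)
    (hinj : Set.InjOn f ↑W) (hadj : ∀ p ∈ W, AdjG p (f p)) :
    W.card ≤ 3 + (univ.filter (fun i => profileOf W i ≠ 0)).card := by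
  classical
  set L := W.filter (fun p => (f p).isLeft)
  set R := W.filter (fun p => ¬ (f p).isLeft)
  have hsplit : L.card + R.card = W.card := card_filter_add_card_filter_not _
  have hfr : ∀ p ∈ R, f p = Sum.inr p.1 := by
    intro p hp
    simp only [R, mem_filter] at hp
    obtain ⟨hpW, hnl⟩ := hp
    rcases h : f p with x | i
    · rw [h] at hnl; simp at hnl
    · have := hadj p hpW
      rw [h] at this
      simp only [AdjG] at this
      rw [this]
  have hL : L.card ≤ 3 := by
    have : L.card ≤ ((univ : Finset (Fin 3)).image (Sum.inl : Fin 3 → Fin 3 ⊕ Fin n)).card := by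
      apply card_le_card_of_injOn f
      · intro p hp
        simp only [L, mem_filter] at hp
        rcases h : f p with x | i
        · simp
        · simp [h] at hp
      · exact hinj.mono (by intro p hp; exact (mem_filter.mp hp).1)
    calc L.card ≤ _ := this
      _ ≤ (univ : Finset (Fin 3)).card := card_image_le
      _ = 3 := by simp
  have hR : R.card ≤ (univ.filter (fun i => profileOf W i ≠ 0)).card := by
    apply card_le_card_of_injOn Prod.fst
    · intro p hp
      have hpW : p ∈ W := (mem_filter.mp hp).1
      simp only [coe_filter, mem_filter, mem_univ, true_and, Set.mem_setOf_eq]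
      intro h0
      have : p ∈ W.filter (fun q => q.1 = p.1) := mem_filter.mpr ⟨hpW, rfl⟩
      simp only [profileOf] at h0
      rw [card_eq_zero.mp h0] at this
      exact absurd this (notMem_empty _)
    · intro p hp q hq hpq
      have hpW : p ∈ W := (mem_filter.mp hp).1
      have hqW : q ∈ W := (mem_filter.mp hq).1
      apply hinj hpW hqW
      rw [hfr p hp, hfr q hq, hpq]
  omega

lemma bad_card_facts (W : Finset (Fin n × Fin 3)) (hb : IsBadProfile (profileOf W)) :
    4 + (univ.filter (fun i => profileOf W i ≠ 0)).card ≤ W.card := by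
  classical
  set c := profileOf W with hc
  rcases hb with ⟨i, j, hij, h1, h2, h0⟩ | ⟨i, j, k, hij, hik, hjk, h1, h2, h3, h0⟩ |
    ⟨i, j, k, l, hij, hik, hil, hjk, hjl, hkl, h1, h2, h3, h4, h0⟩
  · have hsupp : univ.filter (fun m => c m ≠ 0) = {i, j} := by
      ext m
      simp only [mem_filter, mem_univ, true_and, mem_insert, mem_singleton]
      constructor
      · intro hm; by_contra hcon; push_neg at hcon
        exact hm (h0 m hcon.1 hcon.2)
      · rintro (rfl | rfl) <;> omega
    have hsum : ∑ m ∈ ({i, j} : Finset (Fin n)), c m = ∑ m, c m :=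
      sum_subset (subset_univ _) (by
        intro m _ hm
        simp only [mem_insert, mem_singleton] at hm
        push_neg at hm
        exact h0 m hm.1 hm.2)
    rw [card_eq_sum_profile, ← hc, ← hsum, sum_pair hij, hsupp, card_pair hij]
    omega
  · have hsupp : univ.filter (fun m => c m ≠ 0) = {i, j, k} := by
      ext m
      simp only [mem_filter, mem_univ, true_and, mem_insert, mem_singleton]
      constructor
      · intro hm; by_contra hcon; push_neg at hcon
        exact hm (h0 m hcon.1 hcon.2.1 hcon.2.2)
      · rintro (rfl | rfl | rfl) <;> omega
    have hsum : ∑ m ∈ ({i, j, k} : Finset (Fin n)), c m = ∑ m, c m :=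
      sum_subset (subset_univ _) (by
        intro m _ hm
        simp only [mem_insert, mem_singleton] at hm
        push_neg at hm
        exact h0 m hm.1 hm.2.1 hm.2.2)
    have hcard : ({i, j, k} : Finset (Fin n)).card = 3 := by
      rw [card_insert_of_notMem (by simp [hij, hik]), card_pair hjk]
    have hsum3 : ∑ m ∈ ({i, j, k} : Finset (Fin n)), c m = c i + (c j + c k) := by
      rw [sum_insert (by simp [hij, hik]), sum_pair hjk]
    rw [card_eq_sum_profile, ← hc, ← hsum, hsum3, hsupp, hcard]
    omega
  · have hsupp : univ.filter (fun m => c m ≠ 0) = {i, j, k, l} := by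
      ext m
      simp only [mem_filter, mem_univ, true_and, mem_insert, mem_singleton]
      constructor
      · intro hm; by_contra hcon; push_neg at hcon
        exact hm (h0 m hcon.1 hcon.2.1 hcon.2.2.1 hcon.2.2.2)
      · rintro (rfl | rfl | rfl | rfl) <;> omega
    have hsum : ∑ m ∈ ({i, j, k, l} : Finset (Fin n)), c m = ∑ m, c m :=
      sum_subset (subset_univ _) (by
        intro m _ hm
        simp only [mem_insert, mem_singleton] at hm
        push_neg at hm
        exact h0 m hm.1 hm.2.1 hm.2.2.1 hm.2.2.2)
    have hcard : ({i, j, k, l} : Finset (Fin n)).card = 4 := by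
      rw [card_insert_of_notMem (by simp [hij, hik, hil]),
        card_insert_of_notMem (by simp [hjk, hjl]), card_pair hkl]
    have hsum4 : ∑ m ∈ ({i, j, k, l} : Finset (Fin n)), c m = c i + (c j + (c k + c l)) := by
      rw [sum_insert (by simp [hij, hik, hil]), sum_insert (by simp [hjk, hjl]), sum_pair hkl]
    rw [card_eq_sum_profile, ← hc, ← hsum, hsum4, hsupp, hcard]
    omega

lemma exists_piece (U : Finset (Fin n × Fin 3)) (i : Fin n) (m : ℕ)
    (hm : m ≤ profileOf U i) :
    ∃ t, t ⊆ U ∧ (∀ p ∈ t, p.1 = i) ∧ t.card = m := by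
  obtain ⟨t, hts, htc⟩ := exists_subset_card_eq hm
  exact ⟨t, hts.trans (filter_subset _ _), fun p hp => (mem_filter.mp (hts hp)).2, htc⟩

lemma excess_le_of_face {U : Finset (Fin n × Fin 3)} (hU : IsFaceD n U) :
    ∑ i, (profileOf U i - 1) ≤ 3 := by
  classical
  set c := profileOf U with hc
  -- constraint 1 : no two indices with  c = 3
  have C1 : ∀ i j : Fin n, i ≠ j → 3 ≤ c i → 3 ≤ c j → False := by
    intro i j hij hi hj
    obtain ⟨t1, ht1U, ht1f, ht1c⟩ := exists_piece U i 3 hi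
    obtain ⟨t2, ht2U, ht2f, ht2c⟩ := exists_piece U j 3 hj
    have hd := pieces_disjoint ht1f ht2f hij
    apply hU
    refine ⟨t1 ∪ t2, union_subset ht1U ht2U, Or.inl ⟨i, j, hij, ?_, ?_, ?_⟩⟩
    · rw [profile_union hd, profile_piece ht1f, profile_piece ht2f]
      simp [hij, ht1c]
    · rw [profile_union hd, profile_piece ht1f, profile_piece ht2f]
      simp [hij.symm, ht2c]
    · intro k hki hkj
      rw [profile_union hd, profile_piece ht1f, profile_piece ht2f]
      simp [hki, hkj]
  have C2 : ∀ i j k : Fin n, i ≠ j → i ≠ k → j ≠ k →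
      3 ≤ c i → 2 ≤ c j → 2 ≤ c k → False := by
    intro i j k hij hik hjk hi hj hk
    obtain ⟨t1, ht1U, ht1f, ht1c⟩ := exists_piece U i 3 hi
    obtain ⟨t2, ht2U, ht2f, ht2c⟩ := exists_piece U j 2 hj
    obtain ⟨t3, ht3U, ht3f, ht3c⟩ := exists_piece U k 2 hk
    have hd12 := pieces_disjoint ht1f ht2f hij
    have hd13 := pieces_disjoint ht1f ht3f hik
    have hd23 := pieces_disjoint ht2f ht3f hjk
    have hd1 : Disjoint t1 (t2 ∪ t3) := disjoint_union_right.mpr ⟨hd12, hd13⟩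
    apply hU
    refine ⟨t1 ∪ (t2 ∪ t3), union_subset ht1U (union_subset ht2U ht3U),
      Or.inr (Or.inl ⟨i, j, k, hij, hik, hjk, ?_, ?_, ?_, ?_⟩)⟩
    · rw [profile_union hd1, profile_union hd23,
        profile_piece ht1f, profile_piece ht2f, profile_piece ht3f]
      simp [hij, hik, ht1c]
    · rw [profile_union hd1, profile_union hd23,
        profile_piece ht1f, profile_piece ht2f, profile_piece ht3f]
      simp [hij.symm, hjk, ht2c]
    · rw [profile_union hd1, profile_union hd23,
        profile_piece ht1f, profile_piece ht2f, profile_piece ht3f]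
      simp [hik.symm, hjk.symm, ht3c]
    · intro l hli hlj hlk
      rw [profile_union hd1, profile_union hd23,
        profile_piece ht1f, profile_piece ht2f, profile_piece ht3f]
      simp [hli, hlj, hlk]
  have C3 : ∀ i j k l : Fin n, i ≠ j → i ≠ k → i ≠ l → j ≠ k → j ≠ l → k ≠ l →
      2 ≤ c i → 2 ≤ c j → 2 ≤ c k → 2 ≤ c l → False := by
    intro i j k l hij hik hil hjk hjl hkl hi hj hk hl
    obtain ⟨t1, ht1U, ht1f, ht1c⟩ := exists_piece U i 2 hi
    obtain ⟨t2, ht2U, ht2f, ht2c⟩ := exists_piece U j 2 hj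
    obtain ⟨t3, ht3U, ht3f, ht3c⟩ := exists_piece U k 2 hk
    obtain ⟨t4, ht4U, ht4f, ht4c⟩ := exists_piece U l 2 hl
    have hd34 := pieces_disjoint ht3f ht4f hkl
    have hd2 : Disjoint t2 (t3 ∪ t4) := disjoint_union_right.mpr
      ⟨pieces_disjoint ht2f ht3f hjk, pieces_disjoint ht2f ht4f hjl⟩
    have hd1 : Disjoint t1 (t2 ∪ (t3 ∪ t4)) := disjoint_union_right.mpr
      ⟨pieces_disjoint ht1f ht2f hij, disjoint_union_right.mpr
        ⟨pieces_disjoint ht1f ht3f hik, pieces_disjoint ht1f ht4f hil⟩⟩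
    apply hU
    have hrw : ∀ m : Fin n, profileOf (t1 ∪ (t2 ∪ (t3 ∪ t4))) m =
        ((if m = i then 2 else 0) + ((if m = j then 2 else 0) +
          ((if m = k then 2 else 0) + (if m = l then 2 else 0)))) := by
      intro m
      rw [profile_union hd1, profile_union hd2, profile_union hd34,
        profile_piece ht1f, profile_piece ht2f, profile_piece ht3f,
        profile_piece ht4f, ht1c, ht2c, ht3c, ht4c]
    refine ⟨t1 ∪ (t2 ∪ (t3 ∪ t4)),
      union_subset ht1U (union_subset ht2U (union_subset ht3U ht4U)),
      Or.inr (Or.inr ⟨i, j, k, l, hij, hik, hil, hjk, hjl, hkl, ?_, ?_, ?_, ?_, ?_⟩)⟩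
    · rw [hrw]; simp [hij, hik, hil]
    · rw [hrw]; simp [hij.symm, hjk, hjl]
    · rw [hrw]; simp [hik.symm, hjk.symm, hkl]
    · rw [hrw]; simp [hil.symm, hjl.symm, hkl.symm]
    · intro m hmi hmj hmk hml
      rw [hrw]; simp [hmi, hmj, hmk, hml]
  -- counting
  set a := (univ.filter (fun i => c i = 3)).card with ha
  set b := (univ.filter (fun i => c i = 2)).card with hb
  have hsum : ∑ i, (c i - 1) = 2 * a + b := by
    have h1 : ∀ i : Fin n, c i - 1 =
        (if c i = 3 then 2 else 0) + (if c i = 2 then 1 else 0) := by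
      intro i
      have := profile_le_three U i
      rw [← hc] at this
      split_ifs <;> omega
    rw [sum_congr rfl (fun i _ => h1 i), sum_add_distrib]
    congr 1
    · rw [← sum_filter, sum_const, smul_eq_mul, mul_comm]
    · rw [← sum_filter, sum_const, smul_eq_mul, mul_one]
  have hA : a ≤ 1 := by
    by_contra h
    push_neg at h
    obtain ⟨i, hi, j, hj, hij⟩ := one_lt_card.mp h
    simp only [mem_filter, mem_univ, true_and] at hi hj
    exact C1 i j hij (le_of_eq hi.symm) (le_of_eq hj.symm)
  have hB : b ≤ 3 := by
    by_contra h
    push_neg at h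
    set s := univ.filter (fun i => c i = 2) with hs
    have h4 : 4 ≤ s.card := h
    obtain ⟨i, hi⟩ := card_pos.mp (show 0 < s.card by omega)
    have h3' : 3 ≤ (s.erase i).card := by
      rw [card_erase_of_mem hi]; omega
    obtain ⟨j, hj⟩ := card_pos.mp (show 0 < (s.erase i).card by omega)
    have h2' : 2 ≤ ((s.erase i).erase j).card := by
      rw [card_erase_of_mem hj]; omega
    obtain ⟨k, hk⟩ := card_pos.mp (show 0 < ((s.erase i).erase j).card by omega)
    have h1' : 1 ≤ (((s.erase i).erase j).erase k).card := by
      rw [card_erase_of_mem hk]; omega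
    obtain ⟨l, hl⟩ := card_pos.mp (show 0 < (((s.erase i).erase j).erase k).card by omega)
    obtain ⟨hlk, hl2⟩ := mem_erase.mp hl
    obtain ⟨hlj, hl3⟩ := mem_erase.mp hl2
    obtain ⟨hli, hl4⟩ := mem_erase.mp hl3
    obtain ⟨hkj, hk2⟩ := mem_erase.mp hk
    obtain ⟨hki, hk3⟩ := mem_erase.mp hk2
    obtain ⟨hji, hj2⟩ := mem_erase.mp hj
    have e2 : ∀ m ∈ s, c m = 2 := fun m hm => (mem_filter.mp hm).2
    exact C3 i j k l (Ne.symm hji) (Ne.symm hki) (Ne.symm hli) (Ne.symm hkj)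
      (Ne.symm hlj) (Ne.symm hlk) (le_of_eq (e2 i hi).symm) (le_of_eq (e2 j hj2).symm)
      (le_of_eq (e2 k hk3).symm) (le_of_eq (e2 l hl4).symm)
  have hAB : ¬ (1 ≤ a ∧ 2 ≤ b) := by
    rintro ⟨h1, h2⟩
    obtain ⟨i, hi⟩ := card_pos.mp (show 0 < (univ.filter (fun i => c i = 3)).card by omega)
    obtain ⟨j, hj, k, hk, hjk⟩ := one_lt_card.mp (show 1 < (univ.filter (fun i => c i = 2)).card by omega)
    simp only [mem_filter, mem_univ, true_and] at hi hj hk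
    have hij : i ≠ j := fun h => by rw [h, hj] at hi; omega
    have hik : i ≠ k := fun h => by rw [h, hk] at hi; omega
    exact C2 i j k hij hik hjk (le_of_eq hi.symm) (le_of_eq hj.symm) (le_of_eq hk.symm)
  rw [hsum]
  by_cases h1 : 1 ≤ a
  · have : ¬ 2 ≤ b := fun h => hAB ⟨h1, h⟩
    omega
  · omega

lemma matching_of_excess (U : Finset (Fin n × Fin 3))
    (hexc : ∑ i, (profileOf U i - 1) ≤ 3) :
    ∃ f : Fin n × Fin 3 → Fin 3 ⊕ Fin n,
      Set.InjOn f ↑U ∧ ∀ p ∈ U, AdjG p (f p) := by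
  classical
  set E := U.filter (fun p => ∃ q ∈ U, q.1 = p.1 ∧ q.2 < p.2) with hE
  have hprof : ∀ i, profileOf E i ≤ profileOf U i - 1 := by
    intro i
    by_cases hne : (U.filter (fun p => p.1 = i)).Nonempty
    · set m := ((U.filter (fun p => p.1 = i)).image Prod.snd).min'
        (by exact hne.image _) with hm
      have hmmem : (i, m) ∈ U.filter (fun p => p.1 = i) := by
        have := min'_mem ((U.filter (fun p => p.1 = i)).image Prod.snd) (by exact hne.image _)
        rw [← hm] at this
        obtain ⟨q, hq, hq2⟩ := mem_image.mp this
        have hq1 : q.1 = i := (mem_filter.mp hq).2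
        have : q = (i, m) := Prod.ext hq1 hq2
        rwa [this] at hq
      have hsub : E.filter (fun p => p.1 = i) ⊆
          (U.filter (fun p => p.1 = i)).erase (i, m) := by
        intro p hp
        obtain ⟨hpE, hp1⟩ := mem_filter.mp hp
        obtain ⟨hpU, q, hqU, hq1, hq2⟩ := mem_filter.mp hpE
        have hqfib : q ∈ U.filter (fun p => p.1 = i) :=
          mem_filter.mpr ⟨hqU, hq1.trans hp1⟩
        have hmq : m ≤ q.2 := min'_le _ _ (mem_image_of_mem _ hqfib)
        have hmp : m < p.2 := lt_of_le_of_lt hmq hq2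
        refine mem_erase.mpr ⟨?_, mem_filter.mpr ⟨hpU, hp1⟩⟩
        intro hcon
        rw [hcon] at hmp
        exact lt_irrefl _ hmp
      calc profileOf E i ≤ ((U.filter (fun p => p.1 = i)).erase (i, m)).card :=
            card_le_card hsub
        _ = profileOf U i - 1 := card_erase_of_mem hmmem
    · have hUe : U.filter (fun p => p.1 = i) = ∅ := not_nonempty_iff_eq_empty.mp hne
      have h2 : E.filter (fun p => p.1 = i) ⊆ U.filter (fun p => p.1 = i) :=
        filter_subset_filter _ (filter_subset _ _)
      have h3 := card_le_card h2
      rw [hUe, card_empty, Nat.le_zero] at h3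
      simp only [profileOf, h3]
      omega
  have hEcard : E.card ≤ 3 := by
    rw [card_eq_sum_profile]
    calc ∑ i, profileOf E i ≤ ∑ i, (profileOf U i - 1) := sum_le_sum (fun i _ => hprof i)
      _ ≤ 3 := hexc
  have hcards : Fintype.card E ≤ Fintype.card (Fin 3) := by
    rw [Fintype.card_coe, Fintype.card_fin]
    exact hEcard
  obtain ⟨g⟩ := Function.Embedding.nonempty_of_card_le hcards
  refine ⟨fun p => if h : p ∈ E then Sum.inl (g ⟨p, h⟩) else Sum.inr p.1, ?_, ?_⟩
  · intro p hp q hq heq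
    simp only [mem_coe] at hp hq
    by_cases hpE : p ∈ E <;> by_cases hqE : q ∈ E
    · simp only [dif_pos hpE, dif_pos hqE, Sum.inl.injEq] at heq
      exact congrArg Subtype.val (g.injective heq)
    · simp [dif_pos hpE, dif_neg hqE] at heq
    · simp [dif_neg hpE, dif_pos hqE] at heq
    · simp only [dif_neg hpE, dif_neg hqE, Sum.inr.injEq] at heq
      have hpmin : ¬ ∃ r ∈ U, r.1 = p.1 ∧ r.2 < p.2 := by
        intro hcon
        exact hpE (mem_filter.mpr ⟨hp, hcon⟩)
      have hqmin : ¬ ∃ r ∈ U, r.1 = q.1 ∧ r.2 < q.2 := by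
        intro hcon
        exact hqE (mem_filter.mpr ⟨hq, hcon⟩)
      push_neg at hpmin hqmin
      exact Prod.ext heq (le_antisymm (hpmin q hq heq.symm) (hqmin p hp heq))
  · intro p _
    by_cases h : p ∈ E
    · simp only [dif_pos h]; trivial
    · simp only [dif_neg h]; exact rfl

end Lemmas

/-- `Δₙ` is the transversal matroid `M[G,S]` of the bipartite graph `G`:
a subset `U` of `S` is a face of `Δₙ` iff `U` can be saturated by a matching
of `G`, i.e. there is an injective choice `f` of neighbours on `U`. -/
theorem Delta_n_transversal (n : ℕ) (hn : 4 ≤ n) (U : Finset (Fin n × Fin 3)) :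
    IsFaceD n U ↔
      ∃ f : Fin n × Fin 3 → Fin 3 ⊕ Fin n,
        Set.InjOn f ↑U ∧ ∀ p ∈ U, AdjG p (f p) := by
  constructor
  · intro hU
    exact matching_of_excess U (excess_le_of_face hU)
  · rintro ⟨f, hinj, hadj⟩ ⟨W, hWU, hbad⟩
    have h1 := bad_card_facts W hbad
    have h2 := matching_card_le W f (hinj.mono (coe_subset.mpr hWU))
      (fun p hp => hadj p (hWU hp))
    omega
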